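/- Let A, B be n×n positive definite complex matrices and let m, m', M, M' be positive reals satisfying either m'·I ≤ A ≤ m·I < M·I ≤ B ≤ M'·I or m'·I ≤ B ≤ m·I < M·I ≤ A ≤ M'·I in the Loewner order. If 1/2 < v < 1, then A∇_v B ≤ 2v(A∇B − A#B) − r₁(A#B − 2(A#_{1/4}B) + A) + K(h^{1/4}, 2)^{−r̂₁} · (A#_v B) in the Loewner order, where h = M/m, r = min{v, 1 − v}, r₁ = min{2r, 1 − 2r} and r̂₁ = min{2r₁, 1 − 2r₁}. -/

import Mathlib

open Matrix
open scoped ComplexOrder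

/-- Real power of a matrix, defined for Hermitian matrices via the spectral
decomposition (functional calculus); junk value otherwise. -/
noncomputable def mrpow {n : ℕ} (A : Matrix (Fin n) (Fin n) ℂ) (t : ℝ) :
    Matrix (Fin n) (Fin n) ℂ :=
  if h : A.IsHermitian then
    (h.eigenvectorUnitary : Matrix (Fin n) (Fin n) ℂ)
      * Matrix.diagonal (fun i => ((h.eigenvalues i ^ t : ℝ) : ℂ))
      * star (h.eigenvectorUnitary : Matrix (Fin n) (Fin n) ℂ)
  else A

/-- Weighted arithmetic mean `A ∇_v B = (1 - v) A + v B`. -/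
noncomputable def anabla {n : ℕ} (v : ℝ) (A B : Matrix (Fin n) (Fin n) ℂ) :
    Matrix (Fin n) (Fin n) ℂ :=
  ((1 - v : ℝ) : ℂ) • A + ((v : ℝ) : ℂ) • B

/-- Weighted geometric mean `A #_v B = A^{1/2} (A^{-1/2} B A^{-1/2})^v A^{1/2}`. -/
noncomputable def asharp {n : ℕ} (v : ℝ) (A B : Matrix (Fin n) (Fin n) ℂ) :
    Matrix (Fin n) (Fin n) ℂ :=
  mrpow A (1 / 2) * mrpow (mrpow A (-(1 / 2)) * B * mrpow A (-(1 / 2))) v * mrpow A (1 / 2)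

/-- Heinz operator mean `H_v(A, B) = (A #_v B + A #_{1-v} B) / 2`. -/
noncomputable def heinz {n : ℕ} (v : ℝ) (A B : Matrix (Fin n) (Fin n) ℂ) :
    Matrix (Fin n) (Fin n) ℂ :=
  ((1 / 2 : ℝ) : ℂ) • (asharp v A B + asharp (1 - v) A B)

/-- The Loewner order: `loewner X Y` iff `Y - X` is positive semidefinite. -/
def loewner {n : ℕ} (X Y : Matrix (Fin n) (Fin n) ℂ) : Prop := (Y - X).PosSemidef

/-- The Kantorovich constant `K(t, 2) = (t + 1)^2 / (4 t)`. -/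
noncomputable def Kant (t : ℝ) : ℝ := (t + 1) ^ 2 / (4 * t)



lemma kant_pos {t : ℝ} (ht : 0 < t) : 0 < Kant t := by
  unfold Kant; positivity

lemma one_le_kant {t : ℝ} (ht : 0 < t) : 1 ≤ Kant t := by
  rw [Kant, le_div_iff₀ (by positivity)]; nlinarith [sq_nonneg (t - 1)]

lemma kant_inv {t : ℝ} (ht : 0 < t) : Kant t⁻¹ = Kant t := by
  unfold Kant; field_simp; ring

lemma kant_mono {a b : ℝ} (ha : 1 ≤ a) (hab : a ≤ b) : Kant a ≤ Kant b := by
  have hb : 1 ≤ b := ha.trans hab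
  rw [Kant, Kant, div_le_div_iff₀ (by positivity) (by positivity)]
  nlinarith [mul_nonneg (sub_nonneg.2 hab) (sub_nonneg.2 (one_le_mul_of_one_le_of_one_le ha hb))]

lemma kant_le_sq {s : ℝ} (hs : 1 ≤ s) : Kant s ≤ s ^ 2 := by
  rw [Kant, div_le_iff₀ (by positivity)]
  nlinarith [sq_nonneg (s-1), sq_nonneg s]

/-- `x^q ≤ q x + (1-q)` for `x > 0`, `q ∈ [0,1]`. -/
lemma rpow_le_wam {x q : ℝ} (hx : 0 < x) (hq0 : 0 ≤ q) (hq1 : q ≤ 1) :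
    x ^ q ≤ q * x + (1 - q) := by
  have := Real.geom_mean_le_arith_mean2_weighted (w₁ := q) (w₂ := 1 - q) (p₁ := x) (p₂ := 1)
    hq0 (by linarith) hx.le zero_le_one (by ring)
  simpa [Real.one_rpow] using this


lemma uscl {s μ : ℝ} (hs : 0 < s) (h0 : 0 ≤ μ) (h1 : μ ≤ 1) :
    Kant s ^ μ * (s + μ * (s - 1)) ≤ s ^ (1 + μ) := by
  rcases lt_or_ge (s + μ * (s - 1)) 0 with hX | hX
  · have h1' : 0 < Kant s ^ μ := Real.rpow_pos_of_pos (kant_pos hs) μ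
    have h2' : 0 < s ^ (1 + μ) := Real.rpow_pos_of_pos hs _
    nlinarith
  · set b : ℝ := (s + 1) / 2 with hbdef
    have hb : 0 < b := by positivity
    have hK : Kant s = b ^ 2 / s := by rw [Kant, hbdef]; ring
    have hb2 : ((b ^ 2 : ℝ)) ^ μ = b ^ (2 * μ) := by
      rw [← Real.rpow_natCast b 2, ← Real.rpow_mul hb.le]; norm_num
    have hKμ : Kant s ^ μ = b ^ (2 * μ) / s ^ μ := by
      rw [hK, Real.div_rpow (by positivity) hs.le, hb2]
    have hsμ : 0 < s ^ μ := Real.rpow_pos_of_pos hs μ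
    -- reduce to `b ^ (2μ) * X ≤ s ^ (1 + 2μ)`
    have key : b ^ (2 * μ) * (s + μ * (s - 1)) ≤ s ^ (1 + 2 * μ) → 
        Kant s ^ μ * (s + μ * (s - 1)) ≤ s ^ (1 + μ) := by
      intro hkey
      rw [hKμ, div_mul_eq_mul_div, div_le_iff₀ hsμ, ← Real.rpow_add hs]
      calc b ^ (2*μ) * (s + μ * (s - 1)) ≤ s ^ (1 + 2*μ) := hkey
        _ = s ^ (1 + μ + μ) := by ring_nf
    apply key
    rcases le_or_gt μ (1/2) with hμ | hμ
    · -- q = 1 - 2μ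
      set q : ℝ := 1 - 2 * μ with hqdef
      have hq0 : 0 ≤ q := by simp [hqdef]; linarith
      have hq1 : q ≤ 1 := by simp [hqdef]; linarith
      have hsq : 0 < s ^ q := Real.rpow_pos_of_pos hs q
      have amgm : b ^ (1 - q) * s ^ q ≤ (1 - q) * b + q * s :=
        Real.geom_mean_le_arith_mean2_weighted (by linarith) hq0 hb.le hs.le (by ring)
      have hY : (1 - q) * b + q * s = s - μ * (s - 1) := by rw [hqdef, hbdef]; ring
      have h2q : b ^ (2 * μ) = b ^ (1 - q) := by rw [hqdef]; ring_nf
      have hmul : b ^ (2*μ) * (s + μ * (s-1)) * s ^ q ≤ s ^ ((2:ℝ)) := by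
        calc b ^ (2*μ) * (s + μ * (s-1)) * s ^ q 
            = (b ^ (1-q) * s ^ q) * (s + μ * (s-1)) := by rw [h2q]; ring
          _ ≤ (s - μ * (s - 1)) * (s + μ * (s-1)) := by
              rw [← hY]; exact mul_le_mul_of_nonneg_right (hY ▸ (hY.symm ▸ amgm)) hX
          _ = s^2 - (μ * (s-1))^2 := by ring
          _ ≤ s^2 := by nlinarith [sq_nonneg (μ * (s-1))]
          _ = s ^ ((2:ℝ)) := by rw [← Real.rpow_natCast s 2]; norm_num
      rw [← mul_le_mul_iff_left₀ hsq, ← Real.rpow_add hs]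
      calc b ^ (2*μ) * (s + μ * (s-1)) * s ^ q ≤ s ^ ((2:ℝ)) := hmul
        _ = s ^ (1 + 2*μ + q) := by rw [hqdef]; ring_nf
    · -- q = 2 - 2μ
      set q : ℝ := 2 - 2 * μ with hqdef
      have hq0 : 0 ≤ q := by simp [hqdef]; linarith
      have hq1 : q ≤ 1 := by simp [hqdef]; linarith
      have hsq : 0 < s ^ q := Real.rpow_pos_of_pos hs q
      have amgm : b ^ (1 - q) * s ^ q ≤ (1 - q) * b + q * s :=
        Real.geom_mean_le_arith_mean2_weighted (by linarith) hq0 hb.le hs.le (by ring)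
      have h2q : b ^ (2 * μ) = b * b ^ (1 - q) := by
        rw [(by rw [hqdef]; ring : 2 * μ = 1 + (1 - q)), Real.rpow_add hb, Real.rpow_one]
      have hpoly : b * ((1-q)*b + q*s) * (s + μ * (s-1)) ≤ s ^ (3:ℕ) := by
        rw [hbdef, hqdef]
        nlinarith [mul_nonneg (mul_nonneg (mul_nonneg (sq_nonneg (s-1)) (by linarith : (0:ℝ) ≤ s+1)) h0) (by linarith : (0:ℝ) ≤ 2*μ-1), mul_nonneg (sq_nonneg (s-1)) hs.le]
      rw [← mul_le_mul_iff_left₀ hsq, ← Real.rpow_add hs]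
      calc b ^ (2*μ) * (s + μ * (s-1)) * s ^ q 
          = (b ^ (1-q) * s ^ q) * (b * (s + μ * (s-1))) := by rw [h2q]; ring
        _ ≤ ((1-q)*b + q*s) * (b * (s + μ * (s-1))) := by
            apply mul_le_mul_of_nonneg_right amgm
            exact mul_nonneg hb.le hX
        _ = b * ((1-q)*b + q*s) * (s + μ * (s-1)) := by ring
        _ ≤ s ^ (3:ℕ) := hpoly
        _ = s ^ ((3:ℝ)) := by rw [← Real.rpow_natCast s 3]; norm_num
        _ = s ^ (1 + 2*μ + q) := by rw [hqdef]; ring_nf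

set_option maxHeartbeats 1000000 in
lemma main_scalar {s w r1 rh1 : ℝ} (hs : 0 < s) (hw0 : 0 < w) (hw1 : w < 1)
    (hr1 : r1 = min (1 - w) w) (hrh1 : rh1 = min (2 * r1) (1 - 2 * r1)) :
    Kant s ^ rh1 * (-w + (1 + w) * s ^ 2 + r1 * (s - 1) ^ 2) ≤ s ^ (2 * (1 + w)) := by
  have hK1 : 1 ≤ Kant s := one_le_kant hs
  have hKpos : 0 < Kant s := kant_pos hs
  have hr1half : r1 ≤ 1 / 2 := by
    rw [hr1]
    rcases le_total w (1/2) with h|h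
    · exact (min_le_right _ _).trans h
    · exact (min_le_left _ _).trans (by linarith)
  have hr1pos : 0 < r1 := by rw [hr1]; exact lt_min (by linarith) hw0
  have hrh0 : 0 ≤ rh1 := by rw [hrh1]; exact le_min (by linarith) (by linarith)
  have hKr_pos : 0 < Kant s ^ rh1 := Real.rpow_pos_of_pos hKpos _
  rcases le_or_gt w (1/2) with hcase | hcase
  · -- r1 = w, inner = s * (s + 2w(s-1))
    have hr1w : r1 = w := by rw [hr1, min_eq_right (by linarith)]
    have hrh_le : rh1 ≤ 2 * w := by rw [hrh1, hr1w]; exact min_le_left _ _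
    have inner_eq : -w + (1 + w) * s ^ 2 + r1 * (s - 1) ^ 2 = s * (s + 2 * w * (s - 1)) := by
      rw [hr1w]; ring
    rw [inner_eq]
    rcases lt_or_ge (s + 2 * w * (s - 1)) 0 with hZ | hZ
    · have h2' : 0 < s ^ (2 * (1 + w)) := Real.rpow_pos_of_pos hs _
      have h3' : s * (s + 2 * w * (s - 1)) < 0 := mul_neg_of_pos_of_neg hs hZ
      have := mul_neg_of_pos_of_neg hKr_pos h3'
      linarith
    · have h1 : Kant s ^ rh1 ≤ Kant s ^ (2 * w) :=
        Real.rpow_le_rpow_of_exponent_le hK1 hrh_le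
      have h2 : Kant s ^ (2 * w) * (s + 2 * w * (s - 1)) ≤ s ^ (1 + 2 * w) :=
        uscl hs (by linarith) (by linarith)
      calc Kant s ^ rh1 * (s * (s + 2 * w * (s - 1)))
          = s * (Kant s ^ rh1 * (s + 2 * w * (s - 1))) := by ring
        _ ≤ s * (Kant s ^ (2 * w) * (s + 2 * w * (s - 1))) := by
            apply mul_le_mul_of_nonneg_left (mul_le_mul_of_nonneg_right h1 hZ) hs.le
        _ ≤ s * s ^ (1 + 2 * w) := mul_le_mul_of_nonneg_left h2 hs.le
        _ = s ^ (2 * (1 + w)) := by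
            rw [(by ring : 2 * (1 + w) = 1 + (1 + 2 * w)),
              Real.rpow_add hs 1 (1 + 2 * w), Real.rpow_one]
  · -- r1 = 1 - w
    have hr1w : r1 = 1 - w := by rw [hr1, min_eq_left (by linarith)]
    obtain ⟨w', hw'def⟩ : ∃ w' : ℝ, w' = 2 * w - 1 := ⟨_, rfl⟩
    have hw'0 : 0 < w' := by rw [hw'def]; linarith
    have hw'1 : w' < 1 := by rw [hw'def]; linarith
    have hrh_le : rh1 ≤ w' := by
      rw [hrh1, hr1w, hw'def]
      have := min_le_right (2 * (1 - w)) (1 - 2 * (1 - w))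
      linarith
    have inner_eq : -w + (1 + w) * s ^ 2 + r1 * (s - 1) ^ 2
        = ((1 + w') * s ^ 2 - w') + (1 - w') * s * (s - 1) + (2 * s * (s - 1) - (1 - w') * s * (s - 1)) - (2 * s * (s - 1) - (1 - w') * s * (s - 1)) := by
      rw [hr1w, hw'def]; ring
    have hexp : 2 * (1 + w) = 3 + w' := by rw [hw'def]; ring
    rcases le_or_gt 1 s with hs1 | hs1
    · -- s ≥ 1
      have inner_eq2 : -w + (1 + w) * s ^ 2 + r1 * (s - 1) ^ 2
          = ((1 + w') * s ^ 2 - w') + (1 - w') * s * (s - 1) := by rw [hr1w, hw'def]; ring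
      have hs2 : (1:ℝ) ≤ s ^ 2 := by nlinarith
      have hKm : Kant s ≤ Kant (s ^ 2) := kant_mono hs1 (by nlinarith)
      have hK2_1 : 1 ≤ Kant (s ^ 2) := hK1.trans hKm
      have conv2 : ∀ y : ℝ, ((s ^ 2 : ℝ)) ^ y = s ^ (2 * y) := by
        intro y; rw [← Real.rpow_natCast s 2, ← Real.rpow_mul hs.le]; norm_num
      -- piece 1
      have p1nn : 0 ≤ (1 + w') * s ^ 2 - w' := by nlinarith
      have u1 : Kant (s ^ 2) ^ w' * (s ^ 2 + w' * (s ^ 2 - 1)) ≤ (s ^ 2 : ℝ) ^ (1 + w') :=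
        uscl (by positivity) hw'0.le hw'1.le
      have p1bound : Kant s ^ rh1 * ((1 + w') * s ^ 2 - w') ≤ s ^ (2 + 2 * w') := by
        have e1 : Kant s ^ rh1 ≤ Kant (s ^ 2) ^ w' := by
          calc Kant s ^ rh1 ≤ Kant (s ^ 2) ^ rh1 :=
                Real.rpow_le_rpow hKpos.le hKm hrh0
            _ ≤ Kant (s ^ 2) ^ w' := Real.rpow_le_rpow_of_exponent_le hK2_1 hrh_le
        calc Kant s ^ rh1 * ((1 + w') * s ^ 2 - w')
            ≤ Kant (s ^ 2) ^ w' * ((1 + w') * s ^ 2 - w') := mul_le_mul_of_nonneg_right e1 p1nn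
          _ = Kant (s ^ 2) ^ w' * (s ^ 2 + w' * (s ^ 2 - 1)) := by ring_nf
          _ ≤ (s ^ 2 : ℝ) ^ (1 + w') := u1
          _ = s ^ (2 + 2 * w') := by rw [conv2]; ring_nf
      -- piece 2
      have hd : 0 < w' * s + (1 - w') := by nlinarith
      have hwam : s ^ w' ≤ w' * s + (1 - w') := rpow_le_wam hs hw'0.le hw'1.le
      have hsw'pos : 0 < s ^ (1 - w') := Real.rpow_pos_of_pos hs _
      have hmulid : s ^ w' * s ^ (1 - w') = s := by
        rw [← Real.rpow_add hs]; norm_num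
      have hBnn : (0:ℝ) ≤ s ^ (1 - w') - 1 := by
        have : (1:ℝ) ≤ s ^ (1 - w') := Real.one_le_rpow hs1 (by linarith)
        linarith
      have hdB : (1 - w') * (s - 1) ≤ (w' * s + (1 - w')) * (s ^ (1 - w') - 1) := by
        have h1' : s ≤ (w' * s + (1 - w')) * s ^ (1 - w') := by
          calc s = s ^ w' * s ^ (1 - w') := hmulid.symm
            _ ≤ (w' * s + (1 - w')) * s ^ (1 - w') :=
                mul_le_mul_of_nonneg_right hwam hsw'pos.le
        linarith [h1']
      have hd_le_s : w' * s + (1 - w') ≤ s := by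
        have := mul_nonneg (by linarith : (0:ℝ) ≤ 1 - w') (by linarith : (0:ℝ) ≤ s - 1)
        linarith
      have hKle : Kant s ^ rh1 ≤ s ^ (2 * w') := by
        calc Kant s ^ rh1 ≤ Kant s ^ w' := Real.rpow_le_rpow_of_exponent_le hK1 hrh_le
          _ ≤ ((s ^ 2 : ℝ)) ^ w' := Real.rpow_le_rpow hKpos.le (kant_le_sq hs1) hw'0.le
          _ = s ^ (2 * w') := conv2 w'
      have p2bound : Kant s ^ rh1 * ((1 - w') * s * (s - 1)) ≤ s ^ (3 + w') - s ^ (2 + 2 * w') := by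
        have p2nn : 0 ≤ (1 - w') * s * (s - 1) := by
          apply mul_nonneg (by nlinarith) (by linarith)
        have e3 : s ^ (3 + w') - s ^ (2 + 2 * w') = s ^ (2 + 2 * w') * (s ^ (1 - w') - 1) := by
          rw [mul_sub, ← Real.rpow_add hs, mul_one]; ring_nf
        have h5 : (1 - w') * (s - 1) ≤ s * (s ^ (1 - w') - 1) := by
          calc (1 - w') * (s - 1) ≤ (w' * s + (1 - w')) * (s ^ (1 - w') - 1) := hdB
            _ ≤ s * (s ^ (1 - w') - 1) := mul_le_mul_of_nonneg_right hd_le_s hBnn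
        have hspos : 0 < s ^ (1 + 2 * w') := Real.rpow_pos_of_pos hs _
        calc Kant s ^ rh1 * ((1 - w') * s * (s - 1))
            ≤ s ^ (2 * w') * ((1 - w') * s * (s - 1)) := mul_le_mul_of_nonneg_right hKle p2nn
          _ = s ^ (2 * w') * s * ((1 - w') * (s - 1)) := by ring
          _ ≤ s ^ (2 * w') * s * (s * (s ^ (1 - w') - 1)) := by
              apply mul_le_mul_of_nonneg_left h5
              positivity
          _ = (s ^ (2 * w') * s * s) * (s ^ (1 - w') - 1) := by ring
          _ = s ^ (2 + 2 * w') * (s ^ (1 - w') - 1) := by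
              rw [(by ring : 2 + 2 * w' = 2 * w' + 1 + 1), Real.rpow_add hs,
                Real.rpow_add hs, Real.rpow_one]
          _ = s ^ (3 + w') - s ^ (2 + 2 * w') := e3.symm
      rw [inner_eq2, hexp, mul_add]
      linarith
    · -- s < 1
      have inner_eq2 : -w + (1 + w) * s ^ 2 + r1 * (s - 1) ^ 2
          = ((1 + w') * s - w') + 2 * s * (s - 1) := by rw [hr1w, hw'def]; ring
      have p1bound : Kant s ^ rh1 * ((1 + w') * s - w') ≤ s ^ (1 + w') := by
        rcases lt_or_ge ((1 + w') * s - w') 0 with hp1 | hp1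
        · have : 0 < s ^ (1 + w') := Real.rpow_pos_of_pos hs _
          nlinarith
        · have e1 : Kant s ^ rh1 ≤ Kant s ^ w' := Real.rpow_le_rpow_of_exponent_le hK1 hrh_le
          calc Kant s ^ rh1 * ((1 + w') * s - w')
              ≤ Kant s ^ w' * ((1 + w') * s - w') := mul_le_mul_of_nonneg_right e1 hp1
            _ = Kant s ^ w' * (s + w' * (s - 1)) := by ring_nf
            _ ≤ s ^ (1 + w') := uscl hs hw'0.le hw'1.le
      have p2bound : Kant s ^ rh1 * (2 * s * (s - 1)) ≤ s ^ (3 + w') - s ^ (1 + w') := by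
        have e3 : s ^ (3 + w') - s ^ (1 + w') = s ^ (1 + w') * (s ^ 2 - 1) := by
          rw [mul_sub, mul_one, ← Real.rpow_natCast s 2, ← Real.rpow_add hs]; ring_nf
        have hsle : s ^ (1 + w') ≤ s := by
          calc s ^ (1 + w') ≤ s ^ (1:ℝ) :=
              Real.rpow_le_rpow_of_exponent_ge hs hs1.le (by linarith)
            _ = s := Real.rpow_one s
        have hs21 : s ^ 2 - 1 ≤ 0 := by nlinarith
        have h6 : s * (s ^ 2 - 1) ≤ s ^ (1 + w') * (s ^ 2 - 1) :=
          mul_le_mul_of_nonpos_right hsle hs21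
        have h7 : Kant s ^ rh1 * (2 * s * (s - 1)) ≤ 2 * s * (s - 1) := by
          have h8 : 2 * s * (s - 1) ≤ 0 := by nlinarith
          have h9 : 1 ≤ Kant s ^ rh1 := Real.one_le_rpow hK1 hrh0
          nlinarith
        have h10 : 2 * s * (s - 1) ≤ s * (s ^ 2 - 1) := by nlinarith
        rw [e3]; linarith
      rw [inner_eq2, hexp, mul_add]
      linarith

set_option maxHeartbeats 1000000 in
lemma scalar_final {t hh v r r1 rh1 : ℝ} (ht : 0 < t) (hh1 : 1 < hh)
    (hcond : hh ≤ t ∨ t ≤ 1 / hh) (hr : r = min v (1 - v))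
    (hr1 : r1 = min (2 * r) (1 - 2 * r)) (hrh1 : rh1 = min (2 * r1) (1 - 2 * r1))
    (hv0 : 1 / 2 < v) (hv : v < 1) :
    (1 - v) + v * t ≤ 2 * v * ((1 + t) / 2 - t ^ ((1:ℝ)/2))
      - r1 * (t ^ ((1:ℝ)/2) - 2 * t ^ ((1:ℝ)/4) + 1)
      + Kant (hh ^ ((1:ℝ)/4)) ^ (-rh1) * t ^ v := by
  obtain ⟨s, hsdef⟩ : ∃ s : ℝ, s = t ^ ((1:ℝ)/4) := ⟨_, rfl⟩
  obtain ⟨g, hgdef⟩ : ∃ g : ℝ, g = hh ^ ((1:ℝ)/4) := ⟨_, rfl⟩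
  have hs : 0 < s := hsdef ▸ Real.rpow_pos_of_pos ht _
  have hg1 : 1 < g := by
    rw [hgdef]
    exact Real.one_lt_rpow_iff_of_pos (by linarith) |>.2 (Or.inl ⟨hh1, by norm_num⟩)
  obtain ⟨w, hwdef⟩ : ∃ w : ℝ, w = 2 * v - 1 := ⟨_, rfl⟩
  have hw0 : 0 < w := by rw [hwdef]; linarith
  have hw1 : w < 1 := by rw [hwdef]; linarith
  have hrv : r = 1 - v := by rw [hr, min_eq_right (by linarith)]
  have hr1' : r1 = min (1 - w) w := by rw [hr1, hrv, hwdef]; ring_nf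
  have hrh0 : 0 ≤ rh1 := by
    have hr1half : r1 ≤ 1 / 2 := by
      rw [hr1']
      rcases le_total w (1/2) with h'|h'
      · exact (min_le_right _ _).trans h'
      · exact (min_le_left _ _).trans (by linarith)
    have hr1pos : 0 < r1 := by rw [hr1']; exact lt_min (by linarith) hw0
    rw [hrh1]; exact le_min (by linarith) (by linarith)
  -- Kant g ≤ Kant s
  have hKgs : Kant g ≤ Kant s := by
    rcases hcond with hcase | hcase
    · have hgs : g ≤ s := by
        rw [hgdef, hsdef]
        exact Real.rpow_le_rpow (by linarith) hcase (by norm_num)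
      exact kant_mono hg1.le hgs
    · have hsinv : g ≤ s⁻¹ := by
        have h1 : s ≤ g⁻¹ := by
          rw [hgdef, hsdef, ← Real.inv_rpow (by linarith)]
          exact Real.rpow_le_rpow ht.le (by rw [← one_div]; exact hcase) (by norm_num)
        calc g = (g⁻¹)⁻¹ := by rw [inv_inv]
          _ ≤ s⁻¹ := by
            apply inv_anti₀ hs h1
      calc Kant g ≤ Kant s⁻¹ := kant_mono hg1.le hsinv
        _ = Kant s := kant_inv hs
  have hKg_pos : 0 < Kant g := kant_pos (by linarith)
  have hKs_pos : 0 < Kant s := kant_pos hs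
  -- antitone in base for exponent -rh1
  have hKK : Kant s ^ (-rh1) ≤ Kant g ^ (-rh1) :=
    Real.rpow_le_rpow_of_nonpos hKg_pos hKgs (by linarith)
  -- main inequality at s
  have hmain := main_scalar hs hw0 hw1 hr1' hrh1
  have hKsr : 0 < Kant s ^ rh1 := Real.rpow_pos_of_pos hKs_pos _
  have hKsr' : 0 < Kant s ^ (-rh1) := Real.rpow_pos_of_pos hKs_pos _
  have hKmul : Kant s ^ (-rh1) * Kant s ^ rh1 = 1 := by
    rw [← Real.rpow_add hKs_pos]; norm_num
  have hinner : -w + (1 + w) * s ^ 2 + r1 * (s - 1) ^ 2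
      ≤ Kant s ^ (-rh1) * s ^ (2 * (1 + w)) := by
    calc -w + (1 + w) * s ^ 2 + r1 * (s - 1) ^ 2
        = Kant s ^ (-rh1) * (Kant s ^ rh1 * (-w + (1 + w) * s ^ 2 + r1 * (s - 1) ^ 2)) := by
          rw [← mul_assoc, hKmul, one_mul]
      _ ≤ Kant s ^ (-rh1) * s ^ (2 * (1 + w)) := mul_le_mul_of_nonneg_left hmain hKsr'.le
  -- identities
  have ht2 : t ^ ((1:ℝ)/2) = s ^ 2 := by
    rw [hsdef, ← Real.rpow_natCast (t ^ ((1:ℝ)/4)) 2, ← Real.rpow_mul ht.le]; norm_num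
  have ht1 : t ^ ((1:ℝ)/4) = s := hsdef.symm
  have htv : t ^ v = s ^ (2 * (1 + w)) := by
    rw [hsdef, ← Real.rpow_mul ht.le]
    congr 1
    rw [hwdef]; ring
  have htvnn : 0 ≤ s ^ (2 * (1 + w)) := (Real.rpow_pos_of_pos hs _).le
  have hfinal : Kant s ^ (-rh1) * s ^ (2 * (1 + w)) ≤ Kant g ^ (-rh1) * s ^ (2 * (1 + w)) :=
    mul_le_mul_of_nonneg_right hKK htvnn
  rw [ht2, ht1, htv, ← hgdef]
  nlinarith [hinner, hfinal]

namespace SpecAux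

variable {n : ℕ} {X : Matrix (Fin n) (Fin n) ℂ}

noncomputable def specFun (hX : X.IsHermitian) (f : ℝ → ℝ) : Matrix (Fin n) (Fin n) ℂ :=
  (hX.eigenvectorUnitary : Matrix (Fin n) (Fin n) ℂ)
    * Matrix.diagonal (fun i => ((f (hX.eigenvalues i) : ℝ) : ℂ))
    * star (hX.eigenvectorUnitary : Matrix (Fin n) (Fin n) ℂ)

lemma specFun_congr (hX : X.IsHermitian) {f g : ℝ → ℝ}
    (h : ∀ x, f x = g x) : specFun hX f = specFun hX g := by
  simp only [specFun, h]

lemma specFun_add (hX : X.IsHermitian) (f g : ℝ → ℝ) :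
    specFun hX f + specFun hX g = specFun hX (fun x => f x + g x) := by
  unfold specFun
  rw [← Matrix.add_mul, ← Matrix.mul_add, Matrix.diagonal_add]
  have : (fun i => (((f (hX.eigenvalues i) : ℝ) : ℂ) + ((g (hX.eigenvalues i) : ℝ) : ℂ)))
      = fun i => (((f (hX.eigenvalues i) + g (hX.eigenvalues i) : ℝ)) : ℂ) := by
    funext i; push_cast; ring
  rw [this]

lemma specFun_sub (hX : X.IsHermitian) (f g : ℝ → ℝ) :
    specFun hX f - specFun hX g = specFun hX (fun x => f x - g x) := by
  unfold specFun
  rw [← Matrix.sub_mul, ← Matrix.mul_sub, Matrix.diagonal_sub]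
  have : (fun i => (((f (hX.eigenvalues i) : ℝ) : ℂ) - ((g (hX.eigenvalues i) : ℝ) : ℂ)))
      = fun i => (((f (hX.eigenvalues i) - g (hX.eigenvalues i) : ℝ)) : ℂ) := by
    funext i; push_cast; ring
  rw [this]

lemma specFun_smul (hX : X.IsHermitian) (c : ℝ) (f : ℝ → ℝ) :
    ((c : ℝ) : ℂ) • specFun hX f = specFun hX (fun x => c * f x) := by
  have hD : Matrix.diagonal (fun i => (((c * f (hX.eigenvalues i) : ℝ)) : ℂ))
      = (c : ℂ) • Matrix.diagonal (fun i => ((f (hX.eigenvalues i) : ℝ) : ℂ)) := by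
    ext i j
    by_cases hij : i = j
    · subst hij
      simp only [Matrix.diagonal_apply_eq, Matrix.smul_apply, smul_eq_mul]
      push_cast
      ring
    · simp [Matrix.diagonal_apply_ne _ hij]
  unfold specFun
  rw [hD, mul_smul_comm, smul_mul_assoc]

lemma star_mul_self (hX : X.IsHermitian) :
    star (hX.eigenvectorUnitary : Matrix (Fin n) (Fin n) ℂ)
      * (hX.eigenvectorUnitary : Matrix (Fin n) (Fin n) ℂ) = 1 :=
  (Matrix.mem_unitaryGroup_iff').mp hX.eigenvectorUnitary.2

lemma mul_self_star (hX : X.IsHermitian) :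
    (hX.eigenvectorUnitary : Matrix (Fin n) (Fin n) ℂ)
      * star (hX.eigenvectorUnitary : Matrix (Fin n) (Fin n) ℂ) = 1 :=
  (Matrix.mem_unitaryGroup_iff).mp hX.eigenvectorUnitary.2

lemma specFun_one (hX : X.IsHermitian) : specFun hX (fun _ => 1) = 1 := by
  unfold specFun
  have : Matrix.diagonal (fun _ : Fin n => (((1:ℝ)) : ℂ)) = 1 := by
    simp [Matrix.diagonal_one]
  rw [this, Matrix.mul_one, mul_self_star]

lemma specFun_id (hX : X.IsHermitian) : specFun hX (fun x => x) = X := by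
  unfold specFun
  exact (hX.spectral_theorem).symm

lemma specFun_mrpow (hX : X.IsHermitian) (t : ℝ) :
    mrpow X t = specFun hX (fun x => x ^ t) := by
  rw [mrpow, dif_pos hX]; rfl

lemma specFun_mul (hX : X.IsHermitian) (f g : ℝ → ℝ) :
    specFun hX f * specFun hX g = specFun hX (fun x => f x * g x) := by
  unfold specFun
  rw [Matrix.mul_assoc, Matrix.mul_assoc, ← Matrix.mul_assoc (star _),
    ← Matrix.mul_assoc (star _), star_mul_self hX, Matrix.one_mul,
    ← Matrix.mul_assoc, ← Matrix.mul_assoc, Matrix.mul_assoc _ _ (Matrix.diagonal _),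
    Matrix.diagonal_mul_diagonal]
  congr 2
  funext i
  push_cast
  ring

lemma specFun_isHermitian (hX : X.IsHermitian) (f : ℝ → ℝ) :
    (specFun hX f).IsHermitian := by
  have hD : star (Matrix.diagonal (fun i => ((f (hX.eigenvalues i) : ℝ) : ℂ)))
      = Matrix.diagonal (fun i => ((f (hX.eigenvalues i) : ℝ) : ℂ)) := by
    ext i j
    by_cases hij : i = j
    · subst hij
      simp [Matrix.star_apply, Matrix.diagonal_apply_eq, Complex.conj_ofReal]
    · simp [Matrix.star_apply, Matrix.diagonal_apply_ne _ hij,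
        Matrix.diagonal_apply_ne _ (Ne.symm hij)]
  show _ᴴ = _
  rw [← Matrix.star_eq_conjTranspose]
  unfold specFun
  rw [StarMul.star_mul, StarMul.star_mul, star_star, hD, Matrix.mul_assoc]

lemma specFun_posSemidef (hX : X.IsHermitian) {f : ℝ → ℝ}
    (hf : ∀ i, 0 ≤ f (hX.eigenvalues i)) : (specFun hX f).PosSemidef := by
  have hd : (Matrix.diagonal (fun i => ((f (hX.eigenvalues i) : ℝ) : ℂ))).PosSemidef :=
    Matrix.posSemidef_diagonal_iff.mpr fun i => Complex.zero_le_real.mpr (hf i)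
  have := hd.mul_mul_conjTranspose_same (hX.eigenvectorUnitary : Matrix (Fin n) (Fin n) ℂ)
  rwa [← Matrix.star_eq_conjTranspose] at this

lemma star_mul_self_mul_eq_diagonal' (hX : X.IsHermitian) :
    star (hX.eigenvectorUnitary : Matrix (Fin n) (Fin n) ℂ) * X
      * (hX.eigenvectorUnitary : Matrix (Fin n) (Fin n) ℂ)
      = Matrix.diagonal (RCLike.ofReal ∘ hX.eigenvalues) := by
  have := hX.conjStarAlgAut_star_eigenvectorUnitary
  simpa [Unitary.conjStarAlgAut_apply] using this

lemma eig_lower (hX : X.IsHermitian) {c : ℝ}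
    (hpsd : (X - (c : ℂ) • 1).PosSemidef) : ∀ i, c ≤ hX.eigenvalues i := by
  intro i
  have h1 := hpsd.conjTranspose_mul_mul_same (hX.eigenvectorUnitary : Matrix (Fin n) (Fin n) ℂ)
  rw [← Matrix.star_eq_conjTranspose, Matrix.mul_sub, Matrix.sub_mul,
    star_mul_self_mul_eq_diagonal' hX] at h1
  have h2 : star (hX.eigenvectorUnitary : Matrix (Fin n) (Fin n) ℂ) * ((c : ℂ) • 1)
      * (hX.eigenvectorUnitary : Matrix (Fin n) (Fin n) ℂ) = (c : ℂ) • 1 := by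
    rw [mul_smul_comm, smul_mul_assoc, Matrix.mul_one, star_mul_self hX]
  rw [h2] at h1
  have h3 : Matrix.diagonal (RCLike.ofReal ∘ hX.eigenvalues) - (c : ℂ) • 1
      = Matrix.diagonal (fun i => ((hX.eigenvalues i - c : ℝ) : ℂ)) := by
    rw [← Matrix.diagonal_one, ← Matrix.diagonal_smul, Matrix.diagonal_sub]
    congr 1
    funext j
    simp [smul_eq_mul]
  rw [h3] at h1
  have := Matrix.posSemidef_diagonal_iff.mp h1 i
  have := Complex.zero_le_real.mp this
  linarith

lemma eig_upper (hX : X.IsHermitian) {c : ℝ}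
    (hpsd : ((c : ℂ) • 1 - X).PosSemidef) : ∀ i, hX.eigenvalues i ≤ c := by
  intro i
  have h1 := hpsd.conjTranspose_mul_mul_same (hX.eigenvectorUnitary : Matrix (Fin n) (Fin n) ℂ)
  rw [← Matrix.star_eq_conjTranspose, Matrix.mul_sub, Matrix.sub_mul,
    star_mul_self_mul_eq_diagonal' hX] at h1
  have h2 : star (hX.eigenvectorUnitary : Matrix (Fin n) (Fin n) ℂ) * ((c : ℂ) • 1)
      * (hX.eigenvectorUnitary : Matrix (Fin n) (Fin n) ℂ) = (c : ℂ) • 1 := by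
    rw [mul_smul_comm, smul_mul_assoc, Matrix.mul_one, star_mul_self hX]
  rw [h2] at h1
  have h3 : (c : ℂ) • 1 - Matrix.diagonal (RCLike.ofReal ∘ hX.eigenvalues)
      = Matrix.diagonal (fun i => ((c - hX.eigenvalues i : ℝ) : ℂ)) := by
    rw [← Matrix.diagonal_one, ← Matrix.diagonal_smul, Matrix.diagonal_sub]
    congr 1
    funext j
    simp [smul_eq_mul]
  rw [h3] at h1
  have := Matrix.posSemidef_diagonal_iff.mp h1 i
  have := Complex.zero_le_real.mp this
  linarith

lemma specFun_congr_eig (hX : X.IsHermitian) {f g : ℝ → ℝ}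
    (h : ∀ i, f (hX.eigenvalues i) = g (hX.eigenvalues i)) : specFun hX f = specFun hX g := by
  have e : (fun i => ((f (hX.eigenvalues i) : ℝ) : ℂ))
      = fun i => ((g (hX.eigenvalues i) : ℝ) : ℂ) := funext fun i => by rw [h]
  unfold specFun
  rw [e]

lemma conj_add (P M N : Matrix (Fin n) (Fin n) ℂ) :
    P * M * P + P * N * P = P * (M + N) * P := by
  rw [Matrix.mul_add, Matrix.add_mul]

lemma conj_sub (P M N : Matrix (Fin n) (Fin n) ℂ) :
    P * M * P - P * N * P = P * (M - N) * P := by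
  rw [Matrix.mul_sub, Matrix.sub_mul]

lemma conj_smul (P M : Matrix (Fin n) (Fin n) ℂ) (c : ℂ) :
    c • (P * M * P) = P * (c • M) * P := by
  rw [mul_smul_comm, smul_mul_assoc]

lemma psd_smul {Z : Matrix (Fin n) (Fin n) ℂ} (hZ : Z.PosSemidef) {c : ℝ} (hc : 0 ≤ c) :
    (((c : ℝ) : ℂ) • Z).PosSemidef := by
  constructor
  · show _ᴴ = _
    rw [Matrix.conjTranspose_smul, hZ.1.eq, Complex.star_def, Complex.conj_ofReal]
  · intro x
    exact (hZ.smul (Complex.zero_le_real.mpr hc)).2 x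

end SpecAux

open SpecAux

lemma mrpow_isHermitian {n : ℕ} {A : Matrix (Fin n) (Fin n) ℂ} (hA : A.IsHermitian) (t : ℝ) :
    (mrpow A t).IsHermitian := by
  rw [specFun_mrpow hA]; exact specFun_isHermitian hA _

lemma mrpow_mul_mrpow {n : ℕ} {A : Matrix (Fin n) (Fin n) ℂ} (hA : A.PosDef) (x y : ℝ) :
    mrpow A x * mrpow A y = mrpow A (x + y) := by
  rw [specFun_mrpow hA.1, specFun_mrpow hA.1, specFun_mrpow hA.1, specFun_mul]
  exact specFun_congr_eig hA.1 fun i =>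
    (Real.rpow_add (hA.eigenvalues_pos i) x y).symm

lemma mrpow_one {n : ℕ} {A : Matrix (Fin n) (Fin n) ℂ} (hA : A.IsHermitian) :
    mrpow A 1 = A := by
  rw [specFun_mrpow hA, specFun_congr hA fun x => Real.rpow_one x, specFun_id hA]

lemma mrpow_zero {n : ℕ} {A : Matrix (Fin n) (Fin n) ℂ} (hA : A.IsHermitian) :
    mrpow A 0 = 1 := by
  rw [specFun_mrpow hA, specFun_congr hA fun x => Real.rpow_zero x, specFun_one hA]


theorem stmt_14 {n : ℕ} (A B : Matrix (Fin n) (Fin n) ℂ) (m m' M M' v h r r1 rh1 : ℝ)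
    (hA : A.PosDef) (hB : B.PosDef)
    (hm' : 0 < m') (hm : 0 < m) (hM : 0 < M) (hM' : 0 < M') (hmM : m < M)
    (hcond : (loewner ((m' : ℂ) • 1) A ∧ loewner A ((m : ℂ) • 1) ∧
        loewner ((M : ℂ) • 1) B ∧ loewner B ((M' : ℂ) • 1)) ∨
      (loewner ((m' : ℂ) • 1) B ∧ loewner B ((m : ℂ) • 1) ∧
        loewner ((M : ℂ) • 1) A ∧ loewner A ((M' : ℂ) • 1)))
    (hh : h = M / m) (hr : r = min v (1 - v))
    (hr1 : r1 = min (2 * r) (1 - 2 * r)) (hrh1 : rh1 = min (2 * r1) (1 - 2 * r1))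
    (hv0 : 1 / 2 < v) (hv : v < 1) :
    loewner (anabla v A B)
      (((2 * v : ℝ) : ℂ) • (anabla (1 / 2) A B - asharp (1 / 2) A B)
        - ((r1 : ℝ) : ℂ) • (asharp (1 / 2) A B - (2 : ℂ) • asharp (1 / 4) A B + A)
        + ((Kant (h ^ ((1 : ℝ) / 4)) ^ (-rh1) : ℝ) : ℂ) • asharp v A B) := by
  classical
  obtain ⟨P, hPdef⟩ : ∃ P, P = mrpow A (1 / 2) := ⟨_, rfl⟩
  obtain ⟨C, hCdef⟩ : ∃ C, C = mrpow A (-(1 / 2)) := ⟨_, rfl⟩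
  obtain ⟨X, hXdef⟩ : ∃ X, X = C * B * C := ⟨_, rfl⟩
  have hPher : P.IsHermitian := hPdef ▸ mrpow_isHermitian hA.1 _
  have hCher : C.IsHermitian := hCdef ▸ mrpow_isHermitian hA.1 _
  have hPC : P * C = 1 := by
    rw [hPdef, hCdef, mrpow_mul_mrpow hA, show (1/2 + -(1/2) : ℝ) = 0 by norm_num,
      mrpow_zero hA.1]
  have hCP : C * P = 1 := by
    rw [hPdef, hCdef, mrpow_mul_mrpow hA, show (-(1/2) + 1/2 : ℝ) = 0 by norm_num,
      mrpow_zero hA.1]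
  have hPP : P * P = A := by
    rw [hPdef, mrpow_mul_mrpow hA, show (1/2 + 1/2 : ℝ) = 1 by norm_num, mrpow_one hA.1]
  have hXh : X.IsHermitian := by
    rw [hXdef]
    show _ᴴ = _
    rw [← Matrix.star_eq_conjTranspose, StarMul.star_mul, StarMul.star_mul]
    simp only [Matrix.star_eq_conjTranspose, hCher.eq, hB.1.eq, Matrix.mul_assoc]
  have hCAC : C * A * C = 1 := by
    rw [← hPP]
    calc C * (P * P) * C = (C * P) * (P * C) := by simp only [Matrix.mul_assoc]
      _ = 1 := by rw [hCP, hPC, Matrix.one_mul]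
  have hconjC : ∀ {Z : Matrix (Fin n) (Fin n) ℂ}, Z.PosSemidef → (C * Z * C).PosSemidef := by
    intro Z hZ
    have := hZ.mul_mul_conjTranspose_same C
    rwa [hCher.eq] at this
  have hconjP : ∀ {Z : Matrix (Fin n) (Fin n) ℂ}, Z.PosSemidef → (P * Z * P).PosSemidef := by
    intro Z hZ
    have := hZ.mul_mul_conjTranspose_same P
    rwa [hPher.eq] at this
  have hCsm : ∀ (c : ℝ) (Y : Matrix (Fin n) (Fin n) ℂ),
      C * ((c : ℂ) • 1 - Y) * C = (c : ℂ) • (C * C) - C * Y * C := by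
    intro c Y
    rw [Matrix.mul_sub, Matrix.sub_mul, mul_smul_comm, smul_mul_assoc, Matrix.mul_one]
  have hCsm' : ∀ (c : ℝ) (Y : Matrix (Fin n) (Fin n) ℂ),
      C * (Y - (c : ℂ) • 1) * C = C * Y * C - (c : ℂ) • (C * C) := by
    intro c Y
    rw [Matrix.mul_sub, Matrix.sub_mul, mul_smul_comm, smul_mul_assoc, Matrix.mul_one]
  have hh1 : (1 : ℝ) < h := by rw [hh]; exact (one_lt_div hm).2 hmM
  have hmC : (m : ℂ) ≠ 0 := by exact_mod_cast hm.ne'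
  have hMC : (M : ℂ) ≠ 0 := by exact_mod_cast hM.ne'
  have hM'C : (M' : ℂ) ≠ 0 := by exact_mod_cast hM'.ne'
  have heig : ∀ i, (0 < hXh.eigenvalues i) ∧
      (h ≤ hXh.eigenvalues i ∨ hXh.eigenvalues i ≤ 1 / h) := by
    rcases hcond with ⟨c1, c2, c3, c4⟩ | ⟨c1, c2, c3, c4⟩
    · -- m' ≤ A ≤ m < M ≤ B ≤ M'
      have c2' : ((m : ℂ) • 1 - A).PosSemidef := c2
      have c3' : (B - (M : ℂ) • 1).PosSemidef := c3
      have q1 : ((m : ℂ) • (C * C) - 1).PosSemidef := by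
        have := hconjC c2'
        rwa [hCsm m A, hCAC] at this
      have q2 : (X - (M : ℂ) • (C * C)).PosSemidef := by
        have := hconjC c3'
        rwa [hCsm' M B, ← hXdef] at this
      have hsc : ((h : ℝ) : ℂ) * (m : ℂ) = (M : ℂ) := by
        rw [hh]; push_cast; field_simp
      have hsm : (((h : ℝ) : ℂ)) • ((m : ℂ) • (C * C) - 1)
          = (M : ℂ) • (C * C) - ((h : ℝ) : ℂ) • 1 := by
        rw [smul_sub, smul_smul, hsc]
      have comb : (X - ((h : ℝ) : ℂ) • 1).PosSemidef := by
        have hadd := q2.add (SpecAux.psd_smul q1 (by linarith : (0:ℝ) ≤ h))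
        rw [hsm] at hadd
        have e : X - ((h : ℝ) : ℂ) • 1
            = (X - (M : ℂ) • (C * C)) + ((M : ℂ) • (C * C) - ((h : ℝ) : ℂ) • 1) := by abel
        rw [e]; exact hadd
      intro i
      have hi := SpecAux.eig_lower hXh comb i
      exact ⟨by linarith, Or.inl hi⟩
    · -- m' ≤ B ≤ m < M ≤ A ≤ M'
      have c1' : (B - (m' : ℂ) • 1).PosSemidef := c1
      have c2' : ((m : ℂ) • 1 - B).PosSemidef := c2
      have c3' : (A - (M : ℂ) • 1).PosSemidef := c3
      have c4' : ((M' : ℂ) • 1 - A).PosSemidef := c4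
      have q1 : ((1 : Matrix (Fin n) (Fin n) ℂ) - (M : ℂ) • (C * C)).PosSemidef := by
        have := hconjC c3'
        rwa [hCsm' M A, hCAC] at this
      have q2 : ((m : ℂ) • (C * C) - X).PosSemidef := by
        have := hconjC c2'
        rwa [hCsm m B, ← hXdef] at this
      have q3 : (X - (m' : ℂ) • (C * C)).PosSemidef := by
        have := hconjC c1'
        rwa [hCsm' m' B, ← hXdef] at this
      have q4 : ((M' : ℂ) • (C * C) - 1).PosSemidef := by
        have := hconjC c4'
        rwa [hCsm M' A, hCAC] at this
      have hsc1 : ((1 / h : ℝ) : ℂ) * (M : ℂ) = (m : ℂ) := by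
        rw [hh]; push_cast; field_simp
      have hsm1 : (((1 / h : ℝ) : ℂ)) • ((1 : Matrix (Fin n) (Fin n) ℂ) - (M : ℂ) • (C * C))
          = ((1 / h : ℝ) : ℂ) • 1 - (m : ℂ) • (C * C) := by
        rw [smul_sub, smul_smul, hsc1]
      have upper : (((1 / h : ℝ) : ℂ) • 1 - X).PosSemidef := by
        have hadd := q2.add (SpecAux.psd_smul q1 (by positivity : (0:ℝ) ≤ 1 / h))
        rw [hsm1] at hadd
        have e : ((1 / h : ℝ) : ℂ) • 1 - X
            = ((m : ℂ) • (C * C) - X)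
              + (((1 / h : ℝ) : ℂ) • 1 - (m : ℂ) • (C * C)) := by abel
        rw [e]; exact hadd
      have hsc2 : ((m' / M' : ℝ) : ℂ) * (M' : ℂ) = (m' : ℂ) := by
        push_cast; field_simp
      have hsm2 : (((m' / M' : ℝ) : ℂ)) • ((M' : ℂ) • (C * C) - 1)
          = (m' : ℂ) • (C * C) - ((m' / M' : ℝ) : ℂ) • 1 := by
        rw [smul_sub, smul_smul, hsc2]
      have lower : (X - ((m' / M' : ℝ) : ℂ) • 1).PosSemidef := by
        have hadd := q3.add (SpecAux.psd_smul q4 (by positivity : (0:ℝ) ≤ m' / M'))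
        rw [hsm2] at hadd
        have e : X - ((m' / M' : ℝ) : ℂ) • 1
            = (X - (m' : ℂ) • (C * C))
              + ((m' : ℂ) • (C * C) - ((m' / M' : ℝ) : ℂ) • 1) := by abel
        rw [e]; exact hadd
      intro i
      have hiu := SpecAux.eig_upper hXh upper i
      have hil := SpecAux.eig_lower hXh lower i
      have : (0 : ℝ) < m' / M' := div_pos hm' hM'
      exact ⟨by linarith, Or.inr hiu⟩
  have eS : ∀ u : ℝ, asharp u A B = P * SpecAux.specFun hXh (fun x => x ^ u) * P := by
    intro u
    show mrpow A (1 / 2) * mrpow (mrpow A (-(1 / 2)) * B * mrpow A (-(1 / 2))) u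
        * mrpow A (1 / 2) = _
    rw [← hPdef, ← hCdef, ← hXdef, SpecAux.specFun_mrpow hXh]
  have eA : A = P * SpecAux.specFun hXh (fun _ => 1) * P := by
    rw [SpecAux.specFun_one hXh, Matrix.mul_one, hPP]
  have eB : B = P * SpecAux.specFun hXh (fun x => x) * P := by
    rw [SpecAux.specFun_id hXh, hXdef]
    simp only [← Matrix.mul_assoc]
    rw [hPC, Matrix.one_mul, Matrix.mul_assoc, hCP, Matrix.mul_one]
  unfold loewner
  rw [eS, eS, eS, show (2:ℂ) = ((2:ℝ):ℂ) by norm_num]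
  simp only [anabla]
  rw [eA, eB]
  simp only [SpecAux.conj_smul, SpecAux.conj_add, SpecAux.conj_sub, SpecAux.specFun_smul,
    SpecAux.specFun_add, SpecAux.specFun_sub]
  apply hconjP
  apply SpecAux.specFun_posSemidef
  intro i
  obtain ⟨hpos, hcnd⟩ := heig i
  have hsf := scalar_final hpos hh1 hcnd hr hr1 hrh1 hv0 hv
  nlinarith [hsf]
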